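/- GORP per-iteration failure bound: consider one iteration of GORP at state s_i (with s_i visited by some optimal policy), lookahead k, and n rollouts per action sequence, in a deterministic MDP with nonnegative rewards. If n ≥ 6·log(2TA^k)·max_a Q^k_i(s_i, a)·V*_i(s_i)/Δ^k_i(s_i)², then the probability that some action a_i with a_i ∉ argmax_a Q^k_i(s_i, a) achieves the maximal estimated k-step Q-value is at most 1/(2T). -/

import Mathlib

open Finset Classical

/-- Total reward of playing a list of actions from state `s` in a deterministic MDP. -/
def seqReturn {S : Type*} (A : ℕ) (f : S → Fin A → S) (R : S → Fin A → ℝ) :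
    S → List (Fin A) → ℝ
  | _, [] => 0
  | s, a :: rest => R s a + seqReturn A f R (f s a) rest

/-- State reached after playing a list of actions from `s`. -/
def stateAfter {S : Type*} (A : ℕ) (f : S → Fin A → S) : S → List (Fin A) → S
  | s, [] => s
  | s, a :: rest => stateAfter A f (f s a) rest

/-- Value function of a (time-indexed, stochastic) policy by fuel recursion. -/
noncomputable def polV {S : Type*} (A : ℕ) (f : S → Fin A → S) (R : S → Fin A → ℝ)
    (pi : ℕ → S → Fin A → ℝ) : ℕ → ℕ → S → ℝ
  | _, 0, _ => 0
  | t, n + 1, s => ∑ a : Fin A, pi t s a * (R s a + polV A f R pi (t + 1) n (f s a))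

/-- `Q^π_t(s,a)` in a horizon-`T` deterministic MDP. -/
noncomputable def polQ {S : Type*} (A T : ℕ) (f : S → Fin A → S) (R : S → Fin A → ℝ)
    (pi : ℕ → S → Fin A → ℝ) (t : ℕ) (s : S) (a : Fin A) : ℝ :=
  R s a + polV A f R pi (t + 1) (T - t) (f s a)

/-- Optimal value function by fuel recursion. -/
noncomputable def optV {S : Type*} (A : ℕ) (f : S → Fin A → S) (R : S → Fin A → ℝ) :
    ℕ → S → ℝ
  | 0, _ => 0
  | n + 1, s => ⨆ a : Fin A, (R s a + optV A f R n (f s a))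

/-- Q-value-iteration iterates: `qIter ... Q1 0 = Q1`, `qIter ... Q1 (j+1) = QVI (qIter ... Q1 j)`. -/
noncomputable def qIter {S : Type*} (A T : ℕ) (f : S → Fin A → S) (R : S → Fin A → ℝ)
    (Q1 : ℕ → S → Fin A → ℝ) : ℕ → ℕ → S → Fin A → ℝ
  | 0 => Q1
  | j + 1 => fun t s a =>
      R s a + if t < T then ⨆ a' : Fin A, qIter A T f R Q1 j (t + 1) (f s a) a' else 0

section Aux
variable {S : Type*} {A : ℕ} (T : ℕ) (f : S → Fin A → S) (R : S → Fin A → ℝ)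

lemma seqReturn_nonneg (hR : ∀ s a, 0 ≤ R s a) :
    ∀ (l : List (Fin A)) (s : S), 0 ≤ seqReturn A f R s l
  | [], s => le_refl 0
  | a :: l, s => by
      have := seqReturn_nonneg hR l (f s a)
      simp only [seqReturn]
      have := hR s a
      linarith

lemma seqReturn_append :
    ∀ (l₁ : List (Fin A)) (s : S) (l₂ : List (Fin A)),
      seqReturn A f R s (l₁ ++ l₂) =
        seqReturn A f R s l₁ + seqReturn A f R (stateAfter A f s l₁) l₂
  | [], s, l₂ => by simp [seqReturn, stateAfter]
  | a :: l, s, l₂ => by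
      simp only [List.cons_append, seqReturn, stateAfter]
      rw [seqReturn_append l (f s a) l₂]
      ring

lemma optV_nonneg (hA : 0 < A) (hR : ∀ s a, 0 ≤ R s a) :
    ∀ (m : ℕ) (s : S), 0 ≤ optV A f R m s
  | 0, s => le_refl 0
  | m + 1, s => by
      haveI : Nonempty (Fin A) := ⟨⟨0, hA⟩⟩
      have h0 : (0:ℝ) ≤ R s ⟨0, hA⟩ + optV A f R m (f s ⟨0, hA⟩) :=
        add_nonneg (hR _ _) (optV_nonneg hA hR m _)
      calc (0:ℝ) ≤ R s ⟨0, hA⟩ + optV A f R m (f s ⟨0, hA⟩) := h0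
        _ ≤ optV A f R (m+1) s := by
          show _ ≤ ⨆ a : Fin A, (R s a + optV A f R m (f s a))
          exact le_ciSup (f := fun a : Fin A => R s a + optV A f R m (f s a))
            (Finite.bddAbove_range _) _

lemma seqReturn_le_optV (hA : 0 < A) (hR : ∀ s a, 0 ≤ R s a) :
    ∀ (l : List (Fin A)) (m : ℕ), l.length ≤ m → ∀ (s : S),
      seqReturn A f R s l ≤ optV A f R m s
  | [], m, _, s => optV_nonneg f R hA hR m s
  | a :: l, m, hm, s => by
      haveI : Nonempty (Fin A) := ⟨⟨0, hA⟩⟩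
      obtain ⟨m', rfl⟩ : ∃ m', m = m' + 1 := by
        cases m with
        | zero => simp at hm
        | succ m' => exact ⟨m', rfl⟩
      have hl : l.length ≤ m' := by simpa using hm
      calc seqReturn A f R s (a :: l) = R s a + seqReturn A f R (f s a) l := rfl
        _ ≤ R s a + optV A f R m' (f s a) := by
            have := seqReturn_le_optV hA hR l m' hl (f s a); linarith
        _ ≤ optV A f R (m' + 1) s := by
            show _ ≤ ⨆ a' : Fin A, (R s a' + optV A f R m' (f s a'))
            exact le_ciSup (f := fun a' : Fin A => R s a' + optV A f R m' (f s a'))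
              (Finite.bddAbove_range _) a

lemma polV_unif_nonneg (hR : ∀ s a, 0 ≤ R s a) :
    ∀ (m t : ℕ) (s : S), 0 ≤ polV A f R (fun _ _ _ => (A:ℝ)⁻¹) t m s
  | 0, t, s => le_refl 0
  | m + 1, t, s => by
      simp only [polV]
      apply Finset.sum_nonneg
      intro a _
      exact mul_nonneg (by positivity)
        (add_nonneg (hR s a) (polV_unif_nonneg hR m (t+1) (f s a)))

lemma polV_unif_time :
    ∀ (m t t' : ℕ) (s : S),
      polV A f R (fun _ _ _ => (A:ℝ)⁻¹) t m s = polV A f R (fun _ _ _ => (A:ℝ)⁻¹) t' m s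
  | 0, t, t', s => rfl
  | m + 1, t, t', s => by
      simp only [polV]
      refine Finset.sum_congr rfl fun a _ => ?_
      rw [polV_unif_time m (t+1) (t'+1) (f s a)]

end Aux

section Aux2
variable {S : Type*} {A : ℕ} (T : ℕ) (f : S → Fin A → S) (R : S → Fin A → ℝ)

lemma sum_tail_take (hA : 0 < A) :
    ∀ (N m : ℕ), m ≤ N → ∀ s : S,
      ∑ b : Fin N → Fin A, seqReturn A f R s ((List.ofFn b).take m)
        = (A:ℝ)^N * polV A f R (fun _ _ _ => (A:ℝ)⁻¹) 0 m s
  | 0, m, hm, s => by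
      interval_cases m
      simp [polV, seqReturn]
  | N + 1, m, hm, s => by
      have hsum : ∀ F : (Fin (N+1) → Fin A) → ℝ,
          ∑ b : Fin (N+1) → Fin A, F b = ∑ a : Fin A, ∑ g : Fin N → Fin A, F (Fin.cons a g) := by
        intro F
        rw [← Fintype.sum_equiv (Fin.consEquiv (fun _ : Fin (N+1) => Fin A))
          (fun p => F (Fin.cons p.1 p.2)) F (fun p => rfl)]
        rw [Fintype.sum_prod_type]
      cases m with
      | zero =>
          simp [polV, seqReturn]
      | succ m' =>
          have hm' : m' ≤ N := by omega
          rw [hsum]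
          have hterm : ∀ (a : Fin A) (g : Fin N → Fin A),
              seqReturn A f R s ((List.ofFn (Fin.cons a g)).take (m'+1))
                = R s a + seqReturn A f R (f s a) ((List.ofFn g).take m') := by
            intro a g
            have : List.ofFn (Fin.cons a g) = a :: List.ofFn g := by
              rw [List.ofFn_succ]
              simp
            rw [this, List.take_succ_cons]
            rfl
          calc ∑ a : Fin A, ∑ g : Fin N → Fin A,
                seqReturn A f R s ((List.ofFn (Fin.cons a g)).take (m'+1))
              = ∑ a : Fin A, ∑ g : Fin N → Fin A,
                (R s a + seqReturn A f R (f s a) ((List.ofFn g).take m')) := by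
                refine Finset.sum_congr rfl fun a _ => Finset.sum_congr rfl fun g _ => ?_
                exact hterm a g
            _ = ∑ a : Fin A, ((A:ℝ)^N * R s a
                  + (A:ℝ)^N * polV A f R (fun _ _ _ => (A:ℝ)⁻¹) 0 m' (f s a)) := by
                refine Finset.sum_congr rfl fun a _ => ?_
                rw [Finset.sum_add_distrib, Finset.sum_const,
                  sum_tail_take hA N m' hm' (f s a)]
                simp [Fintype.card_fun, mul_comm]
            _ = (A:ℝ)^(N+1) * polV A f R (fun _ _ _ => (A:ℝ)⁻¹) 0 (m'+1) s := by
                simp only [polV]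
                rw [Finset.mul_sum]
                refine Finset.sum_congr rfl fun a _ => ?_
                rw [polV_unif_time f R m' 1 0 (f s a)]
                have hAne : (A:ℝ) ≠ 0 := by positivity
                field_simp
                ring
end Aux2
section Aux3
variable {S : Type*} {A : ℕ} (T : ℕ) (f : S → Fin A → S) (R : S → Fin A → ℝ)

/-- Expected return of: play list `l` from `s` starting at time `t`, then uniformly random
actions, all truncated at horizon `T`. -/
noncomputable def rho (t : ℕ) (s : S) (l : List (Fin A)) : ℝ :=
  if T + 1 - t ≤ l.length then seqReturn A f R s (l.take (T + 1 - t))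
  else seqReturn A f R s l
    + polV A f R (fun _ _ _ => (A:ℝ)⁻¹) 0 (T + 1 - t - l.length) (stateAfter A f s l)

lemma rho_nonneg (hR : ∀ s a, 0 ≤ R s a) (t : ℕ) (s : S) (l : List (Fin A)) :
    0 ≤ rho T f R t s l := by
  unfold rho
  split
  · exact seqReturn_nonneg f R hR _ _
  · exact add_nonneg (seqReturn_nonneg f R hR _ _) (polV_unif_nonneg f R hR _ _ _)

lemma rho_cons {t : ℕ} (ht : t ≤ T) (s : S) (a : Fin A) (l : List (Fin A)) :
    rho T f R t s (a :: l) = R s a + rho T f R (t+1) (f s a) l := by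
  have h1 : T + 1 - t = (T - t) + 1 := by omega
  have h2 : T + 1 - (t + 1) = T - t := by omega
  unfold rho
  rw [h1, h2]
  by_cases hc : T - t ≤ l.length
  · rw [if_pos (by simpa using Nat.succ_le_succ hc), if_pos hc, List.take_succ_cons]
    rfl
  · rw [if_neg (by simpa using fun h => hc (Nat.succ_le_succ_iff.mp h)), if_neg hc]
    have h3 : T - t + 1 - (a :: l).length = T - t - l.length := by
      simp only [List.length_cons]; omega
    rw [h3]
    show R s a + seqReturn A f R (f s a) l + _ = _
    show _ = R s a + (seqReturn A f R (f s a) l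
      + polV A f R (fun _ _ _ => (A:ℝ)⁻¹) 0 (T - t - l.length) (stateAfter A f (f s a) l))
    rw [show stateAfter A f s (a :: l) = stateAfter A f (f s a) l from rfl]
    ring

lemma rho_past (s : S) (l : List (Fin A)) : rho T f R (T+1) s l = 0 := by
  unfold rho
  simp [seqReturn]

lemma sum_rollout (hA : 0 < A) (t : ℕ) (ht : 1 ≤ t) (s : S) (l : List (Fin A)) :
    ∑ b : Fin T → Fin A, seqReturn A f R s ((l ++ List.ofFn b).take (T + 1 - t))
      = (A:ℝ)^T * rho T f R t s l := by
  unfold rho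
  by_cases hc : T + 1 - t ≤ l.length
  · rw [if_pos hc]
    have h5 : ∀ b : Fin T → Fin A,
        (l ++ List.ofFn b).take (T + 1 - t) = l.take (T + 1 - t) :=
      fun b => List.take_append_of_le_length hc
    simp only [h5]
    rw [Finset.sum_const]
    simp [Fintype.card_fun, mul_comm]
  · rw [if_neg hc]
    push_neg at hc
    have hsplit : ∀ b : Fin T → Fin A,
        (l ++ List.ofFn b).take (T + 1 - t)
          = l ++ (List.ofFn b).take (T + 1 - t - l.length) := by
      intro b
      rw [List.take_append, List.take_of_length_le (le_of_lt hc)]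
    simp only [hsplit, seqReturn_append]
    rw [Finset.sum_add_distrib, Finset.sum_const]
    have hmle : T + 1 - t - l.length ≤ T := by omega
    rw [sum_tail_take f R hA T (T + 1 - t - l.length) hmle (stateAfter A f s l)]
    simp [Fintype.card_fun, mul_add, mul_comm]

lemma qIter_eq_rho (hA : 0 < A) :
    ∀ (j t : ℕ), 1 ≤ t → t ≤ T → ∀ (s : S) (a : Fin A),
      qIter A T f R (polQ A T f R (fun _ _ _ => (A:ℝ)⁻¹)) j t s a
        = ⨆ g : Fin j → Fin A, rho T f R t s (a :: List.ofFn g)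
  | 0, t, ht1, ht2, s, a => by
      haveI : Nonempty (Fin A) := ⟨⟨0, hA⟩⟩
      rw [show qIter A T f R (polQ A T f R (fun _ _ _ => (A:ℝ)⁻¹)) 0 t s a
        = polQ A T f R (fun _ _ _ => (A:ℝ)⁻¹) t s a from rfl]
      rw [show (⨆ g : Fin 0 → Fin A, rho T f R t s (a :: List.ofFn g))
          = rho T f R t s [a] by
        rw [ciSup_unique]
        norm_num]
      unfold polQ rho
      by_cases hc : t = T
      · rw [if_pos (by simp only [List.length_cons, List.length_nil]; omega)]
        have h6 : T + 1 - t = 1 := by omega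
        rw [h6, show T - t = 0 from by omega]
        simp [seqReturn, polV]
      · have htlt : t < T := lt_of_le_of_ne ht2 hc
        rw [if_neg (by simp only [List.length_cons, List.length_nil]; omega)]
        have h4 : T + 1 - t - ([a] : List (Fin A)).length = T - t := by
          simp only [List.length_cons, List.length_nil]; omega
        rw [h4]
        have hsa : stateAfter A f s [a] = f s a := rfl
        have hsr : seqReturn A f R s [a] = R s a := by simp [seqReturn]
        rw [hsa, hsr, polV_unif_time f R (T - t) (t+1) 0 (f s a)]
  | j + 1, t, ht1, ht2, s, a => by
      haveI : Nonempty (Fin A) := ⟨⟨0, hA⟩⟩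
      rw [show qIter A T f R (polQ A T f R (fun _ _ _ => (A:ℝ)⁻¹)) (j+1) t s a
        = R s a + (if t < T then
            ⨆ a' : Fin A, qIter A T f R (polQ A T f R (fun _ _ _ => (A:ℝ)⁻¹)) j (t+1) (f s a) a'
          else 0) from rfl]
      have hrw : ∀ g : Fin (j+1) → Fin A,
          rho T f R t s (a :: List.ofFn g)
            = R s a + rho T f R (t+1) (f s a) (List.ofFn g) :=
        fun g => rho_cons T f R ht2 s a (List.ofFn g)
      have hcons : ∀ (a' : Fin A) (g : Fin j → Fin A),
          List.ofFn (Fin.cons a' g : Fin (j+1) → Fin A) = a' :: List.ofFn g := by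
        intro a' g
        rw [List.ofFn_succ]
        simp
      simp only [hrw]
      rw [← add_ciSup (Finite.bddAbove_range _) (R s a)]
      congr 1
      by_cases hc : t < T
      · rw [if_pos hc]
        have IH : ∀ a' : Fin A,
            qIter A T f R (polQ A T f R (fun _ _ _ => (A:ℝ)⁻¹)) j (t+1) (f s a) a'
              = ⨆ g : Fin j → Fin A, rho T f R (t+1) (f s a) (a' :: List.ofFn g) :=
          fun a' => qIter_eq_rho hA j (t+1) (by omega) (by omega) (f s a) a'
        simp only [IH]
        apply le_antisymm
        · apply ciSup_le; intro a'
          apply ciSup_le; intro g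
          rw [← hcons a' g]
          exact le_ciSup (f := fun g : Fin (j+1) → Fin A =>
            rho T f R (t+1) (f s a) (List.ofFn g)) (Finite.bddAbove_range _) _
        · apply ciSup_le; intro g
          have hg : List.ofFn g = g 0 :: List.ofFn (fun i : Fin j => g i.succ) :=
            List.ofFn_succ
          rw [hg]
          calc rho T f R (t+1) (f s a) (g 0 :: List.ofFn (fun i : Fin j => g i.succ))
              ≤ ⨆ g' : Fin j → Fin A, rho T f R (t+1) (f s a) (g 0 :: List.ofFn g') :=
                le_ciSup (f := fun g' : Fin j → Fin A =>
                  rho T f R (t+1) (f s a) (g 0 :: List.ofFn g')) (Finite.bddAbove_range _) _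
            _ ≤ ⨆ a' : Fin A, ⨆ g' : Fin j → Fin A,
                  rho T f R (t+1) (f s a) (a' :: List.ofFn g') :=
                le_ciSup (f := fun a' : Fin A => ⨆ g' : Fin j → Fin A,
                  rho T f R (t+1) (f s a) (a' :: List.ofFn g')) (Finite.bddAbove_range _) _
      · rw [if_neg hc]
        have hz : ∀ g : Fin (j+1) → Fin A,
            rho T f R (t+1) (f s a) (List.ofFn g) = 0 := by
          intro g
          rw [show t + 1 = T + 1 from by omega]
          exact rho_past T f R (f s a) (List.ofFn g)
        simp only [hz]
        exact ciSup_const.symm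
end Aux3
section Aux4

/-- Chord bound for the exponential on a segment. -/
lemma exp_chord {V x c : ℝ} (hV : 0 < V) (hx0 : 0 ≤ x) (hxV : x ≤ V) :
    Real.exp (c * x) ≤ 1 + (x / V) * (Real.exp (c * V) - 1) := by
  have hθ0 : 0 ≤ x / V := div_nonneg hx0 hV.le
  have hθ1 : x / V ≤ 1 := (div_le_one hV).mpr hxV
  have hconv := convexOn_exp.2 (Set.mem_univ (0:ℝ)) (Set.mem_univ (c * V))
    (show (0:ℝ) ≤ 1 - x / V by linarith) hθ0
    (show (1 - x / V) + x / V = 1 by ring)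
  have harg : (1 - x / V) • (0:ℝ) + (x / V) • (c * V) = c * x := by
    have hVne : V ≠ 0 := hV.ne'
    simp only [smul_eq_mul, mul_zero, zero_add]
    rw [div_mul_eq_mul_div, div_eq_iff hVne]
    ring
  rw [harg] at hconv
  calc Real.exp (c * x) ≤ (1 - x / V) • Real.exp 0 + (x / V) • Real.exp (c * V) := hconv
    _ = 1 + (x / V) * (Real.exp (c * V) - 1) := by
        simp [Real.exp_zero, smul_eq_mul]
        ring

/-- Chernoff-style bound on the sum of exponentials of a bounded nonneg variable. -/
lemma mgf_sum_le {β : Type*} [Fintype β] (X : β → ℝ) (V c m : ℝ) (hV : 0 < V)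
    (hX0 : ∀ b, 0 ≤ X b) (hXV : ∀ b, X b ≤ V)
    (hm : ∑ b : β, X b = (Fintype.card β : ℝ) * m) :
    ∑ b : β, Real.exp (c * X b)
      ≤ (Fintype.card β : ℝ) * Real.exp ((m / V) * (Real.exp (c * V) - 1)) := by
  have h1 : ∑ b : β, Real.exp (c * X b)
      ≤ ∑ b : β, (1 + (X b / V) * (Real.exp (c * V) - 1)) :=
    Finset.sum_le_sum fun b _ => exp_chord hV (hX0 b) (hXV b)
  have h2 : ∑ b : β, (1 + (X b / V) * (Real.exp (c * V) - 1))
      = (Fintype.card β : ℝ) * (1 + (m / V) * (Real.exp (c * V) - 1)) := by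
    rw [Finset.sum_add_distrib, Finset.sum_const]
    have : ∑ b : β, (X b / V) * (Real.exp (c * V) - 1)
        = ((∑ b : β, X b) / V) * (Real.exp (c * V) - 1) := by
      rw [← Finset.sum_mul, ← Finset.sum_div]
    rw [this, hm]
    simp
    ring
  have h3 : (1 : ℝ) + (m / V) * (Real.exp (c * V) - 1)
      ≤ Real.exp ((m / V) * (Real.exp (c * V) - 1)) := by
    have := Real.add_one_le_exp ((m / V) * (Real.exp (c * V) - 1))
    linarith
  calc ∑ b : β, Real.exp (c * X b)
      ≤ (Fintype.card β : ℝ) * (1 + (m / V) * (Real.exp (c * V) - 1)) := h1.trans h2.le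
    _ ≤ (Fintype.card β : ℝ) * Real.exp ((m / V) * (Real.exp (c * V) - 1)) := by
        apply mul_le_mul_of_nonneg_left h3 (by positivity)

/-- A finite sup over a nonempty finite type is attained. -/
lemma exists_ciSup_eq {ι : Type*} [Finite ι] [Nonempty ι] (g : ι → ℝ) :
    ∃ i, (∀ j, g j ≤ g i) ∧ (⨆ j, g j) = g i := by
  obtain ⟨i, hi⟩ := Finite.exists_max g
  exact ⟨i, hi, le_antisymm (ciSup_le hi) (le_ciSup (Finite.bddAbove_range g) i)⟩

end Aux4
section Aux5

lemma prod_pair {P : Type*} [Fintype P] [DecidableEq P] (F : P → ℝ) (p q : P)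
    (hpq : p ≠ q) (hother : ∀ r, r ≠ p → r ≠ q → F r = 1) :
    ∏ r : P, F r = F p * F q := by
  rw [← Finset.mul_prod_erase Finset.univ F (Finset.mem_univ p),
    ← Finset.mul_prod_erase (Finset.univ.erase p) F
      (Finset.mem_erase.mpr ⟨hpq.symm, Finset.mem_univ q⟩),
    Finset.prod_eq_one, mul_one]
  intro r hr
  have h1 : r ≠ q := (Finset.mem_erase.mp hr).1
  have h2 : r ≠ p := (Finset.mem_erase.mp (Finset.mem_erase.mp hr).2).1
  exact hother r h2 h1

lemma pair_event_bound {β P : Type*} [Fintype β] [Fintype P] [DecidableEq P]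
    [Nonempty β] (n : ℕ)
    (X : P → β → ℝ) (V mseq mstar L : ℝ) (seq star : P) (hne : seq ≠ star)
    (hV : 0 < V)
    (hX0 : ∀ p b, 0 ≤ X p b) (hXV : ∀ p b, X p b ≤ V)
    (hmseq : ∑ b : β, X seq b = (Fintype.card β : ℝ) * mseq)
    (hmstar : ∑ b : β, X star b = (Fintype.card β : ℝ) * mstar)
    (lam : ℝ) (hlam : 0 ≤ lam)
    (hkey : (n:ℝ) * ((mseq / V) * (Real.exp (lam * V) - 1)
        + (mstar / V) * (Real.exp (-lam * V) - 1)) ≤ -L) :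
    ((Finset.univ.filter (fun ω : P × Fin n → β =>
        ∑ j : Fin n, X star (ω (star, j)) ≤ ∑ j : Fin n, X seq (ω (seq, j)))).card : ℝ)
      ≤ (Fintype.card (P × Fin n → β) : ℝ) * Real.exp (-L) := by
  classical
  set h : (P × Fin n) → β → ℝ := fun c b =>
    if c.1 = seq then Real.exp (lam * X seq b)
    else if c.1 = star then Real.exp (-lam * X star b) else 1 with hh
  have hpos : ∀ c b, 0 ≤ h c b := by
    intro c b
    simp only [hh]
    split
    · positivity
    · split
      · positivity
      · norm_num
  -- the product form of e^{λ(S_seq - S_star)}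
  have hGdef : ∀ ω : P × Fin n → β, (∏ c : P × Fin n, h c (ω c)) =
      Real.exp (lam * ∑ j : Fin n, X seq (ω (seq, j))
        - lam * ∑ j : Fin n, X star (ω (star, j))) := by
    intro ω
    rw [Fintype.prod_prod_type]
    rw [prod_pair (fun p : P => ∏ j : Fin n, h (p, j) (ω (p, j))) seq star hne ?_]
    · have h1 : (∏ j : Fin n, h (seq, j) (ω (seq, j)))
          = Real.exp (lam * ∑ j : Fin n, X seq (ω (seq, j))) := by
        rw [Finset.mul_sum, Real.exp_sum]
        refine Finset.prod_congr rfl fun j _ => ?_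
        simp [hh]
      have h2 : (∏ j : Fin n, h (star, j) (ω (star, j)))
          = Real.exp (-lam * ∑ j : Fin n, X star (ω (star, j))) := by
        rw [show (-lam * ∑ j : Fin n, X star (ω (star, j)))
          = ∑ j : Fin n, -lam * X star (ω (star, j)) from Finset.mul_sum _ _ _,
          Real.exp_sum]
        refine Finset.prod_congr rfl fun j _ => ?_
        simp [hh, hne.symm]
      rw [h1, h2, ← Real.exp_add]
      ring_nf
    · intro r hr1 hr2
      apply Finset.prod_eq_one
      intro j _
      simp [hh, hr1, hr2]
  -- counting: card ≤ sum of products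
  have hcount : ((Finset.univ.filter (fun ω : P × Fin n → β =>
        ∑ j : Fin n, X star (ω (star, j)) ≤ ∑ j : Fin n, X seq (ω (seq, j)))).card : ℝ)
      ≤ ∑ ω : P × Fin n → β, ∏ c : P × Fin n, h c (ω c) := by
    rw [← Finset.sum_filter_add_sum_filter_not Finset.univ
      (fun ω : P × Fin n → β =>
        ∑ j : Fin n, X star (ω (star, j)) ≤ ∑ j : Fin n, X seq (ω (seq, j)))
      (fun ω => ∏ c : P × Fin n, h c (ω c))]
    have hA1 : ((Finset.univ.filter (fun ω : P × Fin n → β =>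
          ∑ j : Fin n, X star (ω (star, j)) ≤ ∑ j : Fin n, X seq (ω (seq, j)))).card : ℝ)
        ≤ ∑ ω ∈ Finset.univ.filter (fun ω : P × Fin n → β =>
          ∑ j : Fin n, X star (ω (star, j)) ≤ ∑ j : Fin n, X seq (ω (seq, j))),
          ∏ c : P × Fin n, h c (ω c) := by
      rw [Finset.card_eq_sum_ones]
      push_cast
      apply Finset.sum_le_sum
      intro ω hω
      rw [hGdef ω]
      rw [Finset.mem_filter] at hω
      rw [show (1:ℝ) = Real.exp 0 from (Real.exp_zero).symm]
      apply Real.exp_le_exp.mpr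
      have := hω.2
      nlinarith [hω.2, hlam]
    have hA2 : (0:ℝ) ≤ ∑ ω ∈ Finset.univ.filter (fun ω : P × Fin n → β =>
          ¬(∑ j : Fin n, X star (ω (star, j)) ≤ ∑ j : Fin n, X seq (ω (seq, j)))),
          ∏ c : P × Fin n, h c (ω c) :=
      Finset.sum_nonneg fun ω _ => Finset.prod_nonneg fun c _ => hpos c (ω c)
    linarith
  -- factorize
  have hfact : ∑ ω : P × Fin n → β, ∏ c : P × Fin n, h c (ω c)
      = ∏ c : P × Fin n, ∑ b : β, h c b := by
    rw [Finset.prod_univ_sum]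
    rw [Fintype.piFinset_univ]
  set E1 : ℝ := Real.exp ((mseq / V) * (Real.exp (lam * V) - 1)) with hE1
  set E2 : ℝ := Real.exp ((mstar / V) * (Real.exp (-lam * V) - 1)) with hE2
  have hw : ∀ c : P × Fin n, ∑ b : β, h c b ≤ (Fintype.card β : ℝ) *
      (if c.1 = seq then E1 else if c.1 = star then E2 else 1) := by
    intro c
    by_cases h1 : c.1 = seq
    · rw [if_pos h1]
      have he : ∀ b, h c b = Real.exp (lam * X seq b) := fun b => by
        show (if c.1 = seq then _ else _) = _
        rw [if_pos h1]
      rw [Finset.sum_congr rfl (fun b _ => he b)]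
      exact mgf_sum_le (X seq) V lam mseq hV (hX0 seq) (hXV seq) hmseq
    · rw [if_neg h1]
      by_cases h2 : c.1 = star
      · rw [if_pos h2]
        have he : ∀ b, h c b = Real.exp (-lam * X star b) := fun b => by
          show (if c.1 = seq then _ else if c.1 = star then _ else _) = _
          rw [if_neg h1, if_pos h2]
        rw [Finset.sum_congr rfl (fun b _ => he b)]
        exact mgf_sum_le (X star) V (-lam) mstar hV (hX0 star) (hXV star) hmstar
      · rw [if_neg h2]
        have he : ∀ b, h c b = 1 := fun b => by
          show (if c.1 = seq then _ else if c.1 = star then _ else _) = _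
          rw [if_neg h1, if_neg h2]
        rw [Finset.sum_congr rfl (fun b _ => he b)]
        simp
  have hprod : ∏ c : P × Fin n, ∑ b : β, h c b ≤
      ∏ c : P × Fin n, ((Fintype.card β : ℝ) *
        (if c.1 = seq then E1 else if c.1 = star then E2 else 1)) :=
    Finset.prod_le_prod (fun c _ => Finset.sum_nonneg fun b _ => hpos c b)
      (fun c _ => hw c)
  have hE1nn : (0:ℝ) ≤ E1 := le_of_lt (Real.exp_pos _)
  have hE2nn : (0:ℝ) ≤ E2 := le_of_lt (Real.exp_pos _)
  have hsplit : (∏ c : P × Fin n, ((Fintype.card β:ℝ) *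
      (if c.1 = seq then E1 else if c.1 = star then E2 else 1)))
      = (Fintype.card β:ℝ)^(Fintype.card P * n) * (E1^n * E2^n) := by
    rw [Finset.prod_mul_distrib, Finset.prod_const, Finset.card_univ]
    congr 1
    · rw [Fintype.card_prod, Fintype.card_fin]
    · rw [Fintype.prod_prod_type]
      have hconst : ∀ p : P,
          (∏ _j : Fin n, (if p = seq then E1 else if p = star then E2 else 1))
            = (if p = seq then E1 else if p = star then E2 else 1)^n := by
        intro p; rw [Finset.prod_const, Finset.card_univ, Fintype.card_fin]
      rw [Finset.prod_congr rfl (fun p _ => hconst p)]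
      rw [prod_pair (fun p : P => (if p = seq then E1 else if p = star then E2 else 1)^n)
        seq star hne (fun r h1 h2 => by simp [h1, h2])]
      have hss : (star = seq) = False := by simp [Ne.symm hne]
      simp [hne, Ne.symm hne]
  have hcardW : (Fintype.card (P × Fin n → β) : ℝ)
      = (Fintype.card β:ℝ)^(Fintype.card P * n) := by
    rw [Fintype.card_fun]
    push_cast
    rw [Fintype.card_prod, Fintype.card_fin]
  have hEfin : E1^n * E2^n ≤ Real.exp (-L) := by
    rw [hE1, hE2, ← Real.exp_nat_mul, ← Real.exp_nat_mul, ← Real.exp_add]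
    apply Real.exp_le_exp.mpr
    calc (n:ℝ) * ((mseq / V) * (Real.exp (lam * V) - 1))
          + (n:ℝ) * ((mstar / V) * (Real.exp (-lam * V) - 1))
        = (n:ℝ) * ((mseq / V) * (Real.exp (lam * V) - 1)
          + (mstar / V) * (Real.exp (-lam * V) - 1)) := by ring
      _ ≤ -L := hkey
  calc ((Finset.univ.filter (fun ω : P × Fin n → β =>
        ∑ j : Fin n, X star (ω (star, j)) ≤ ∑ j : Fin n, X seq (ω (seq, j)))).card : ℝ)
      ≤ ∑ ω : P × Fin n → β, ∏ c : P × Fin n, h c (ω c) := hcount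
    _ = ∏ c : P × Fin n, ∑ b : β, h c b := hfact
    _ ≤ (Fintype.card β:ℝ)^(Fintype.card P * n) * (E1^n * E2^n) := by
        rw [← hsplit]; exact hprod
    _ ≤ (Fintype.card β:ℝ)^(Fintype.card P * n) * Real.exp (-L) := by
        apply mul_le_mul_of_nonneg_left hEfin (by positivity)
    _ = (Fintype.card (P × Fin n → β) : ℝ) * Real.exp (-L) := by rw [hcardW]

end Aux5
section Aux6

lemma key_ineq (Qmax Q2 V L n mseq : ℝ)
    (hQmax : 0 < Qmax) (hQ2 : 0 ≤ Q2) (hQ2lt : Q2 < Qmax) (hVQ : Qmax ≤ V)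
    (hmnn : 0 ≤ mseq) (hmseq : mseq ≤ Q2)
    (hL : 0 ≤ L) (hnn : 0 ≤ n)
    (hn : 6 * L * (Qmax * V / (Qmax - Q2)^2) ≤ n) :
    ∃ u : ℝ, 0 < u ∧
      n * ((mseq / V) * (Real.exp u - 1) + (Qmax / V) * (Real.exp (-u) - 1)) ≤ -L := by
  set Δ : ℝ := Qmax - Q2 with hΔ
  have hΔpos : 0 < Δ := by simp [hΔ]; linarith
  have hVpos : 0 < V := lt_of_lt_of_le hQmax hVQ
  set c : ℝ := Δ / (2 * Qmax) with hc
  have hc0 : 0 < c := by positivity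
  have hcQ : c * (2 * Qmax) = Δ := by
    rw [hc]; field_simp
  have hΔle : Δ ≤ Qmax := by simp [hΔ]; linarith
  have hc2 : c ≤ 1/2 := by
    rw [hc, div_le_iff₀ (by positivity)]
    linarith
  have h1c : (0:ℝ) < 1 + c := by linarith
  refine ⟨Real.log (1 + c), Real.log_pos (by linarith), ?_⟩
  rw [Real.exp_log h1c, Real.exp_neg, Real.exp_log h1c]
  -- the main estimate on the exponent
  have hA1 : Q2 - Qmax / (1 + c) ≤ -Δ/3 := by
    rw [sub_le_iff_le_add, ← sub_le_iff_le_add', le_div_iff₀ h1c]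
    have e1 : c * Q2 ≤ c * Qmax := mul_le_mul_of_nonneg_left (le_of_lt hQ2lt) hc0.le
    have e2 : Δ * c ≤ Δ * (1/2) := mul_le_mul_of_nonneg_left hc2 hΔpos.le
    nlinarith
  have hA2 : (mseq / V) * ((1 + c) - 1) + (Qmax / V) * ((1 + c)⁻¹ - 1)
      ≤ (c / V) * (Q2 - Qmax / (1 + c)) := by
    have expand : (c / V) * (Q2 - Qmax / (1 + c))
        = (Q2 / V) * ((1 + c) - 1) + (Qmax / V) * ((1 + c)⁻¹ - 1) := by
      field_simp
      ring
    rw [expand]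
    have : (mseq / V) * ((1 + c) - 1) ≤ (Q2 / V) * ((1 + c) - 1) := by
      apply mul_le_mul_of_nonneg_right _ (by linarith)
      exact div_le_div_of_nonneg_right hmseq hVpos.le
    linarith
  have hA3 : (c / V) * (Q2 - Qmax / (1 + c)) ≤ (c / V) * (-Δ/3) :=
    mul_le_mul_of_nonneg_left hA1 (by positivity)
  have hA4 : (c / V) * (-Δ/3) = -(Δ^2 / (6 * (Qmax * V))) := by
    rw [hc]
    field_simp
    ring
  have hLn : L ≤ n * (Δ^2 / (6 * (Qmax * V))) := by
    have hpos' : (0:ℝ) < Δ^2 / (6 * (Qmax * V)) := by positivity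
    have := mul_le_mul_of_nonneg_right hn hpos'.le
    calc L = 6 * L * (Qmax * V / Δ^2) * (Δ^2 / (6 * (Qmax * V))) := by
          field_simp
      _ ≤ n * (Δ^2 / (6 * (Qmax * V))) := this
  have hinner : (mseq / V) * ((1 + c) - 1) + (Qmax / V) * ((1 + c)⁻¹ - 1)
      ≤ -(Δ^2 / (6 * (Qmax * V))) := by linarith
  calc n * ((mseq / V) * ((1 + c) - 1) + (Qmax / V) * ((1 + c)⁻¹ - 1))
      ≤ n * (-(Δ^2 / (6 * (Qmax * V)))) := mul_le_mul_of_nonneg_left hinner hnn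
    _ ≤ -L := by nlinarith

end Aux6

/--
GORP per-iteration failure bound.  Consider one iteration of GORP at
timestep `i ∈ [1,T]` and state `si` (visited by some optimal action sequence), with
lookahead `k` and `n` rollouts per length-`k` action sequence, in a deterministic MDP with
nonnegative rewards.  Each estimate `Q̂(seq)` is the average over `n` uniformly random
rollouts (sequence `seq` followed by random actions until the horizon).  If
`n ≥ 6·log(2TA^k)·(max_a Q^k_i(si,a))·V*_i(si)/Δ^k_i(si)²`, then the probability (uniform
counting measure over the rollout randomness) that some maximizing sequence of `Q̂` begins
with an action not in `argmax_a Q^k_i(si, ·)` is at most `1/(2T)`.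
-/
theorem gorp_per_iteration_failure_bound
    {S : Type*} [Fintype S]
    (A T k n : ℕ) (hA : 0 < A) (hT : 1 ≤ T) (hk : 0 < k)
    (f : S → Fin A → S) (R : S → Fin A → ℝ) (s1 : S)
    (hRnn : ∀ s a, 0 ≤ R s a)
    (i : ℕ) (hi : 1 ≤ i) (hiT : i ≤ T)
    (si : S)
    -- si is visited at timestep i by some optimal action sequence
    (hsi : ∃ acts : Fin T → Fin A,
      (∀ acts' : Fin T → Fin A,
          seqReturn A f R s1 (List.ofFn acts') ≤ seqReturn A f R s1 (List.ofFn acts)) ∧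
      stateAfter A f s1 ((List.ofFn acts).take (i - 1)) = si)
    -- Q^k : the (k−1)-fold QVI iterate of the random policy's Q-function
    (Qk : ℕ → S → Fin A → ℝ)
    (hQk : Qk = qIter A T f R (polQ A T f R (fun _ _ _ => (A : ℝ)⁻¹)) (k - 1))
    (Vstar : ℕ → S → ℝ) (hV : Vstar = fun t s => optV A f R (T + 1 - t) s)
    (gap : ℕ → S → ℝ)
    (hgap : gap = fun t s => (⨆ a, Qk t s a) -
      sSup {x : ℝ | (∃ a, Qk t s a = x) ∧ x < ⨆ a, Qk t s a})
    -- enough rollouts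
    (hn : 6 * Real.log (2 * T * (A : ℝ) ^ k) *
        ((⨆ a, Qk i si a) * Vstar i si / (gap i si) ^ 2) ≤ (n : ℝ))
    -- GORP's Monte-Carlo Q-value estimates at this iteration
    (Qhat : (Fin k → Fin A) → (((Fin k → Fin A) × Fin n) → (Fin T → Fin A)) → ℝ)
    (hQhat : Qhat = fun seq ω =>
      (∑ j : Fin n,
        seqReturn A f R si
          ((List.ofFn seq ++ List.ofFn (ω (seq, j))).take (T + 1 - i))) / n) :
    2 * T * (Finset.univ.filter
        (fun ω : ((Fin k → Fin A) × Fin n) → (Fin T → Fin A) =>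
          ∃ seq : Fin k → Fin A,
            ¬ (∀ a' : Fin A, Qk i si a' ≤ Qk i si (seq ⟨0, hk⟩)) ∧
            ∀ seq' : Fin k → Fin A, Qhat seq' ω ≤ Qhat seq ω)).card
      ≤ Fintype.card (((Fin k → Fin A) × Fin n) → (Fin T → Fin A)) := by
  classical
  by_cases hP : ∃ a b : Fin A, Qk i si a < Qk i si b
  case neg =>
    push_neg at hP
    have hempty : (Finset.univ.filter
        (fun ω : ((Fin k → Fin A) × Fin n) → (Fin T → Fin A) =>
          ∃ seq : Fin k → Fin A,
            ¬ (∀ a' : Fin A, Qk i si a' ≤ Qk i si (seq ⟨0, hk⟩)) ∧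
            ∀ seq' : Fin k → Fin A, Qhat seq' ω ≤ Qhat seq ω)) = ∅ := by
      apply Finset.filter_eq_empty_iff.mpr
      intro ω _
      rintro ⟨seq, hnsub, -⟩
      exact hnsub fun a' => hP (seq ⟨0, hk⟩) a'
    rw [hempty]
    simp
  case pos =>
  obtain ⟨k', rfl⟩ : ∃ k', k = k' + 1 := ⟨k - 1, by omega⟩
  haveI : Nonempty (Fin A) := ⟨⟨0, hA⟩⟩
  simp only [Nat.add_sub_cancel] at hQk
  have hQk' : ∀ a, Qk i si a
      = ⨆ g : Fin k' → Fin A, rho T f R i si (a :: List.ofFn g) := by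
    intro a; rw [hQk]; exact qIter_eq_rho T f R hA k' i hi hiT si a
  set X : (Fin (k'+1) → Fin A) → (Fin T → Fin A) → ℝ :=
    fun seq b => seqReturn A f R si ((List.ofFn seq ++ List.ofFn b).take (T + 1 - i))
    with hX
  set V : ℝ := Vstar i si with hVdef
  have hcardβ : (Fintype.card (Fin T → Fin A) : ℝ) = (A:ℝ)^T := by
    rw [Fintype.card_fun, Fintype.card_fin, Fintype.card_fin]
    push_cast
    rfl
  have hX0 : ∀ seq b, 0 ≤ X seq b := fun seq b => seqReturn_nonneg f R hRnn _ _
  have hXV : ∀ seq b, X seq b ≤ V := by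
    intro seq b
    rw [hVdef, hV]
    apply seqReturn_le_optV f R hA hRnn _ (T + 1 - i) _
    rw [List.length_take]
    exact min_le_left _ _
  have hXsum : ∀ seq : Fin (k'+1) → Fin A, ∑ b : Fin T → Fin A, X seq b
      = (Fintype.card (Fin T → Fin A) : ℝ) * rho T f R i si (List.ofFn seq) := by
    intro seq
    rw [hcardβ]
    exact sum_rollout T f R hA i hi si (List.ofFn seq)
  have hzero : ∀ seq : Fin (k'+1) → Fin A, seq ⟨0, hk⟩ = seq 0 := by
    intro seq
    congr 1
  have hofn : ∀ seq : Fin (k'+1) → Fin A,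
      List.ofFn seq = seq 0 :: List.ofFn (fun j : Fin k' => seq j.succ) :=
    fun seq => List.ofFn_succ
  have hmle : ∀ seq : Fin (k'+1) → Fin A,
      rho T f R i si (List.ofFn seq) ≤ Qk i si (seq 0) := by
    intro seq
    rw [hQk' (seq 0), hofn seq]
    exact le_ciSup (f := fun g : Fin k' → Fin A =>
      rho T f R i si (seq 0 :: List.ofFn g)) (Finite.bddAbove_range _) _
  have hmnn : ∀ seq : Fin (k'+1) → Fin A, 0 ≤ rho T f R i si (List.ofFn seq) :=
    fun seq => rho_nonneg T f R hRnn i si _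
  have hQnn : ∀ a, 0 ≤ Qk i si a := by
    intro a
    rw [hQk' a]
    exact le_trans (rho_nonneg T f R hRnn i si _)
      (le_ciSup (f := fun g : Fin k' → Fin A => rho T f R i si (a :: List.ofFn g))
        (Finite.bddAbove_range _) (Classical.arbitrary _))
  obtain ⟨amax, hamax, hQmaxeq⟩ := exists_ciSup_eq (fun a => Qk i si a)
  set Qmax : ℝ := ⨆ a, Qk i si a with hQmaxdef
  obtain ⟨gstar, hgstar, hgsup⟩ :=
    exists_ciSup_eq (fun g : Fin k' → Fin A => rho T f R i si (amax :: List.ofFn g))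
  set sstar : Fin (k'+1) → Fin A := Fin.cons amax gstar with hsstar
  have hsstar0 : sstar 0 = amax := Fin.cons_zero _ _
  have hmstar : rho T f R i si (List.ofFn sstar) = Qmax := by
    rw [hofn sstar, hsstar0]
    have htail : (fun j : Fin k' => sstar j.succ) = gstar := by
      funext j
      exact Fin.cons_succ _ _ j
    rw [htail, ← hgsup, ← hQk' amax, hQmaxeq]
  obtain ⟨a0, b0, hab⟩ := hP
  have hb0le : Qk i si b0 ≤ Qmax := hQmaxeq ▸ hamax b0
  have hQmaxpos : 0 < Qmax := lt_of_le_of_lt (hQnn a0) (lt_of_lt_of_le hab hb0le)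
  set below : Set ℝ := {x : ℝ | (∃ a, Qk i si a = x) ∧ x < Qmax} with hbelow
  have hbelow_ne : below.Nonempty := ⟨Qk i si a0, ⟨a0, rfl⟩, lt_of_lt_of_le hab hb0le⟩
  have hbelow_fin : below.Finite :=
    Set.Finite.subset (Set.finite_range (fun a => Qk i si a)) (fun x hx => by
      obtain ⟨a, ha⟩ := hx.1
      exact ⟨a, ha⟩)
  set Q2 : ℝ := sSup below with hQ2def
  have hQ2mem : Q2 ∈ below := Set.Nonempty.csSup_mem hbelow_ne hbelow_fin
  have hQ2lt : Q2 < Qmax := hQ2mem.2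
  have hQ2nn : 0 ≤ Q2 := by
    obtain ⟨a, ha⟩ := hQ2mem.1
    rw [← ha]
    exact hQnn a
  have hgap' : gap i si = Qmax - Q2 := by
    rw [hQ2def, hbelow, hQmaxdef, hgap]
  have hVQ : Qmax ≤ V := by
    have h1 : ∑ b : Fin T → Fin A, X sstar b
        ≤ ∑ _b : Fin T → Fin A, V := Finset.sum_le_sum fun b _ => hXV sstar b
    rw [hXsum sstar, hmstar, Finset.sum_const, Finset.card_univ, nsmul_eq_mul] at h1
    have hcpos : (0:ℝ) < (Fintype.card (Fin T → Fin A) : ℝ) := by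
      rw [hcardβ]; positivity
    exact le_of_mul_le_mul_left h1 hcpos
  have hVpos : 0 < V := lt_of_lt_of_le hQmaxpos hVQ
  set L : ℝ := Real.log (2 * T * (A:ℝ)^(k'+1)) with hLdef
  have hTA1 : (1:ℝ) < 2 * T * (A:ℝ)^(k'+1) := by
    have h1 : (1:ℝ) ≤ (T:ℝ) := by exact_mod_cast hT
    have h2 : (1:ℝ) ≤ (A:ℝ)^(k'+1) := by
      apply one_le_pow₀
      have : 1 ≤ A := hA
      exact_mod_cast this
    nlinarith
  have hLpos : 0 < L := Real.log_pos hTA1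
  rw [hgap'] at hn
  have hgapV : (0:ℝ) < (Qmax - Q2)^2 := pow_pos (sub_pos.mpr hQ2lt) 2
  have hnpos : (0:ℝ) < (n:ℝ) :=
    lt_of_lt_of_le (mul_pos (mul_pos (by norm_num) hLpos)
      (div_pos (mul_pos hQmaxpos hVpos) hgapV)) hn
  have hnNat : 0 < n := by exact_mod_cast hnpos
  -- per-sequence Chernoff bound
  have hmain : ∀ seq : Fin (k'+1) → Fin A, Qk i si (seq 0) < Qmax →
      ((Finset.univ.filter (fun ω : (Fin (k'+1) → Fin A) × Fin n → (Fin T → Fin A) =>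
          ∑ j : Fin n, X sstar (ω (sstar, j)) ≤ ∑ j : Fin n, X seq (ω (seq, j)))).card : ℝ)
        ≤ (Fintype.card ((Fin (k'+1) → Fin A) × Fin n → (Fin T → Fin A)) : ℝ)
            * Real.exp (-L) := by
    intro seq hsub
    have hne : seq ≠ sstar := by
      intro h
      rw [h, hsstar0, ← hQmaxeq] at hsub
      exact lt_irrefl _ hsub
    have hmseqle : rho T f R i si (List.ofFn seq) ≤ Q2 := by
      refine le_trans (hmle seq) (le_csSup hbelow_fin.bddAbove ?_)
      exact ⟨⟨seq 0, rfl⟩, hsub⟩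
    obtain ⟨u, hupos, hukey⟩ := key_ineq Qmax Q2 V L (n:ℝ) (rho T f R i si (List.ofFn seq))
      hQmaxpos hQ2nn hQ2lt hVQ (hmnn seq) hmseqle hLpos.le hnpos.le hn
    have hlamV : (u / V) * V = u := by field_simp
    refine pair_event_bound n X V (rho T f R i si (List.ofFn seq)) Qmax L seq sstar hne
      hVpos hX0 hXV (hXsum seq) (by rw [hXsum sstar, hmstar]) (u / V)
      (by positivity) ?_
    rw [hlamV, show -(u / V) * V = -u by field_simp]
    exact hukey
  -- union bound
  set Sub : Finset (Fin (k'+1) → Fin A) :=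
    Finset.univ.filter (fun seq => Qk i si (seq 0) < Qmax) with hSub
  have hsubset : (Finset.univ.filter
      (fun ω : ((Fin (k'+1) → Fin A) × Fin n) → (Fin T → Fin A) =>
        ∃ seq : Fin (k'+1) → Fin A,
          ¬ (∀ a' : Fin A, Qk i si a' ≤ Qk i si (seq ⟨0, hk⟩)) ∧
          ∀ seq' : Fin (k'+1) → Fin A, Qhat seq' ω ≤ Qhat seq ω))
      ⊆ Sub.biUnion (fun seq =>
        Finset.univ.filter (fun ω : (Fin (k'+1) → Fin A) × Fin n → (Fin T → Fin A) =>
          ∑ j : Fin n, X sstar (ω (sstar, j)) ≤ ∑ j : Fin n, X seq (ω (seq, j)))) := by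
    intro ω hω
    rw [Finset.mem_filter] at hω
    obtain ⟨-, seq, hnsub, hmax⟩ := hω
    push_neg at hnsub
    obtain ⟨a', ha'⟩ := hnsub
    rw [hzero seq] at ha'
    apply Finset.mem_biUnion.mpr
    refine ⟨seq, Finset.mem_filter.mpr ⟨Finset.mem_univ _, ?_⟩,
      Finset.mem_filter.mpr ⟨Finset.mem_univ _, ?_⟩⟩
    · exact lt_of_lt_of_le ha' (hQmaxeq ▸ hamax a')
    · have hq := hmax sstar
      rw [hQhat] at hq
      have hdiv := (div_le_div_iff_of_pos_right (c := (n:ℝ)) hnpos).mp hq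
      exact hdiv
  have hcard1 := Finset.card_le_card hsubset
  have hcard2 := le_trans hcard1 (Finset.card_biUnion_le (s := Sub))
  have hcardR : ((Finset.univ.filter
      (fun ω : ((Fin (k'+1) → Fin A) × Fin n) → (Fin T → Fin A) =>
        ∃ seq : Fin (k'+1) → Fin A,
          ¬ (∀ a' : Fin A, Qk i si a' ≤ Qk i si (seq ⟨0, hk⟩)) ∧
          ∀ seq' : Fin (k'+1) → Fin A, Qhat seq' ω ≤ Qhat seq ω)).card : ℝ)
      ≤ (A:ℝ)^(k'+1) *
        ((Fintype.card ((Fin (k'+1) → Fin A) × Fin n → (Fin T → Fin A)) : ℝ)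
          * Real.exp (-L)) := by
    calc ((Finset.univ.filter _).card : ℝ)
        ≤ (∑ seq ∈ Sub, (Finset.univ.filter
            (fun ω : (Fin (k'+1) → Fin A) × Fin n → (Fin T → Fin A) =>
              ∑ j : Fin n, X sstar (ω (sstar, j))
                ≤ ∑ j : Fin n, X seq (ω (seq, j)))).card : ℕ) := by exact_mod_cast hcard2
      _ = ∑ seq ∈ Sub, ((Finset.univ.filter
            (fun ω : (Fin (k'+1) → Fin A) × Fin n → (Fin T → Fin A) =>
              ∑ j : Fin n, X sstar (ω (sstar, j))
                ≤ ∑ j : Fin n, X seq (ω (seq, j)))).card : ℝ) := by push_cast; rfl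
      _ ≤ ∑ _seq ∈ Sub, ((Fintype.card ((Fin (k'+1) → Fin A) × Fin n → (Fin T → Fin A)) : ℝ)
            * Real.exp (-L)) := by
          apply Finset.sum_le_sum
          intro seq hseq
          rw [hSub, Finset.mem_filter] at hseq
          exact hmain seq hseq.2
      _ = (Sub.card : ℝ) * ((Fintype.card ((Fin (k'+1) → Fin A) × Fin n → (Fin T → Fin A)) : ℝ)
            * Real.exp (-L)) := by rw [Finset.sum_const, nsmul_eq_mul]
      _ ≤ (A:ℝ)^(k'+1) * ((Fintype.card ((Fin (k'+1) → Fin A) × Fin n → (Fin T → Fin A)) : ℝ)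
            * Real.exp (-L)) := by
          apply mul_le_mul_of_nonneg_right _ (by positivity)
          have h1 : Sub.card ≤ Fintype.card (Fin (k'+1) → Fin A) := Finset.card_le_univ _
          have h2 : Fintype.card (Fin (k'+1) → Fin A) = A^(k'+1) := by
            rw [Fintype.card_fun, Fintype.card_fin, Fintype.card_fin]
          rw [h2] at h1
          exact_mod_cast h1
  have hexp : Real.exp (-L) = (2 * T * (A:ℝ)^(k'+1))⁻¹ := by
    rw [hLdef, Real.exp_neg, Real.exp_log (by linarith)]
  -- final arithmetic
  have hfinal : (2 * T : ℝ) * ((Finset.univ.filter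
      (fun ω : ((Fin (k'+1) → Fin A) × Fin n) → (Fin T → Fin A) =>
        ∃ seq : Fin (k'+1) → Fin A,
          ¬ (∀ a' : Fin A, Qk i si a' ≤ Qk i si (seq ⟨0, hk⟩)) ∧
          ∀ seq' : Fin (k'+1) → Fin A, Qhat seq' ω ≤ Qhat seq ω)).card : ℝ)
      ≤ (Fintype.card ((Fin (k'+1) → Fin A) × Fin n → (Fin T → Fin A)) : ℝ) := by
    rw [hexp] at hcardR
    have hTpos : (0:ℝ) < (T:ℝ) := by exact_mod_cast hT
    have hApos : (0:ℝ) < (A:ℝ)^(k'+1) := by positivity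
    have heq : (A:ℝ)^(k'+1) *
        ((Fintype.card ((Fin (k'+1) → Fin A) × Fin n → (Fin T → Fin A)) : ℝ)
          * (2 * T * (A:ℝ)^(k'+1))⁻¹)
        = (Fintype.card ((Fin (k'+1) → Fin A) × Fin n → (Fin T → Fin A)) : ℝ) / (2 * T) := by
      field_simp
    rw [heq] at hcardR
    rw [mul_comm]
    rw [← le_div_iff₀ (by positivity)]
    calc ((Finset.univ.filter _).card : ℝ) ≤ _ := hcardR
      _ = _ := by ring_nf
  exact_mod_cast hfinal
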